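/- Let d ≥ 1 and let Ω ⊂ ℝ^d be a nonempty bounded open convex set with Lebesgue measure |Ω|. Then there exist constants C₁ > 0 and C₂ > 0, depending only on Ω, with the following property: for every function v : ℝ^d → ℝ that is differentiable at every point of Ω, nonnegative on Ω, and such that both v and x ↦ ‖∇v(x)‖ are Lebesgue integrable on Ω, setting K := ∫_Ω max(log v(x), 0) dx, one has ∫_Ω v(x) dx ≤ |Ω|·exp(C₁·K) + (C₂/|Ω|)·∫_Ω ‖∇v(x)‖ dx. -/

import Mathlib

open MeasureTheory Set
open scoped ENNReal

lemma lemB {d : ℕ} (F : EuclideanSpace ℝ (Fin d) → ℝ≥0∞)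
    (b : EuclideanSpace ℝ (Fin d)) {c : ℝ} (hc : c ≠ 0) :
    ∫⁻ z, F (b + c • z) = ENNReal.ofReal |(c ^ d)⁻¹| * ∫⁻ z, F z := by
  have h1 : ∫⁻ z, F (b + c • z) ∂volume
      = ∫⁻ y, F (b + y) ∂(Measure.map (fun z : EuclideanSpace ℝ (Fin d) => c • z) volume) :=
    (lintegral_map_equiv (fun y => F (b + y))
      ((Homeomorph.smul (Units.mk0 c hc)).toMeasurableEquiv)).symm
  rw [h1, Measure.map_addHaar_smul volume hc, lintegral_smul_measure,
    lintegral_add_left_eq_self F b, finrank_euclideanSpace_fin, smul_eq_mul]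

lemma lemA {d : ℕ} {Ω : Set (EuclideanSpace ℝ (Fin d))} (hconv : Convex ℝ Ω)
    {v : EuclideanSpace ℝ (Fin d) → ℝ} (hdiff : ∀ x ∈ Ω, DifferentiableAt ℝ v x)
    {x y : EuclideanSpace ℝ (Fin d)} (hx : x ∈ Ω) (hy : y ∈ Ω) :
    ENNReal.ofReal (v x) ≤ ENNReal.ofReal (v y) + ENNReal.ofReal ‖x - y‖ *
      ∫⁻ t in Set.Ioc (0:ℝ) 1, ENNReal.ofReal ‖fderiv ℝ v (y + t • (x - y))‖ := by
  rcases eq_or_ne x y with rfl | hxy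
  · exact le_add_of_le_of_nonneg le_rfl zero_le
  set γ : ℝ → EuclideanSpace ℝ (Fin d) := fun t => y + t • (x - y) with hγ
  have hmem : ∀ t ∈ Set.Icc (0:ℝ) 1, γ t ∈ Ω := by
    intro t ht
    have : (1 - t) • y + t • x ∈ Ω := hconv hy hx (by linarith [ht.2]) ht.1 (by ring)
    convert this using 1
    simp [hγ, smul_sub, sub_smul, one_smul]
    abel
  set J : ℝ≥0∞ := ∫⁻ t in Set.Ioc (0:ℝ) 1, ENNReal.ofReal ‖fderiv ℝ v (γ t)‖ with hJ
  rcases eq_top_or_lt_top J with hJt | hJf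
  · rw [hJt, ENNReal.mul_top, add_top]
    · exact le_top
    · simpa [sub_eq_zero] using hxy
  -- finite case
  have hγc : Continuous γ := by fun_prop
  have hγm : Measurable γ := hγc.measurable
  set φ : ℝ → ℝ := fun t => fderiv ℝ v (γ t) (x - y) with hφ
  have hφm : Measurable φ := (measurable_fderiv_apply_const ℝ v (x - y)).comp hγm
  have hBm : Measurable fun t => ‖fderiv ℝ v (γ t)‖ :=
    ((measurable_fderiv ℝ v).comp hγm).norm
  have hD : ∀ t ∈ Set.Icc (0:ℝ) 1, HasDerivAt (fun s => v (γ s)) (φ t) t := by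
    intro t ht
    have h1 : HasDerivAt γ (x - y) t := by
      simpa [hγ, one_smul] using ((hasDerivAt_id t).smul_const (x - y)).const_add y
    exact ((hdiff _ (hmem t ht)).hasFDerivAt).comp_hasDerivAt t h1
  have hbound : ∀ t, |φ t| ≤ ‖fderiv ℝ v (γ t)‖ * ‖x - y‖ := by
    intro t
    calc |φ t| = ‖fderiv ℝ v (γ t) (x - y)‖ := (Real.norm_eq_abs _).symm
    _ ≤ ‖fderiv ℝ v (γ t)‖ * ‖x - y‖ := (fderiv ℝ v (γ t)).le_opNorm _
  have hBfin : ∫⁻ t in Set.Ioc (0:ℝ) 1,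
      ENNReal.ofReal (‖fderiv ℝ v (γ t)‖ * ‖x - y‖) < ⊤ := by
    have : ∀ t, ENNReal.ofReal (‖fderiv ℝ v (γ t)‖ * ‖x - y‖)
        = ENNReal.ofReal ‖fderiv ℝ v (γ t)‖ * ENNReal.ofReal ‖x - y‖ := fun t =>
      ENNReal.ofReal_mul (norm_nonneg _)
    simp_rw [this]
    rw [lintegral_mul_const' _ _ ENNReal.ofReal_ne_top]
    exact ENNReal.mul_lt_top hJf ENNReal.ofReal_lt_top
  have hBint : IntegrableOn (fun t => ‖fderiv ℝ v (γ t)‖ * ‖x - y‖) (Set.Ioc (0:ℝ) 1) := by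
    refine ⟨((hBm.mul measurable_const).aestronglyMeasurable), ?_⟩
    rw [hasFiniteIntegral_iff_ofReal]
    · exact hBfin
    · exact Filter.Eventually.of_forall fun t => mul_nonneg (norm_nonneg _) (norm_nonneg _)
  have hφint : IntegrableOn φ (Set.Ioc (0:ℝ) 1) := by
    refine Integrable.mono' hBint hφm.aestronglyMeasurable ?_
    exact Filter.Eventually.of_forall fun t => by
      simpa [Real.norm_eq_abs] using hbound t
  have hφii : IntervalIntegrable φ volume 0 1 :=
    (intervalIntegrable_iff_integrableOn_Ioc_of_le zero_le_one).2 hφint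
  have hBii : IntervalIntegrable (fun t => ‖fderiv ℝ v (γ t)‖ * ‖x - y‖) volume 0 1 :=
    (intervalIntegrable_iff_integrableOn_Ioc_of_le zero_le_one).2 hBint
  have hftc : ∫ t in (0:ℝ)..1, φ t = v (γ 1) - v (γ 0) :=
    intervalIntegral.integral_eq_sub_of_hasDerivAt
      (fun t ht => hD t (by rwa [Set.uIcc_of_le zero_le_one] at ht)) hφii
  have hγ1 : γ 1 = x := by simp [hγ]
  have hγ0 : γ 0 = y := by simp [hγ]
  have key : v x ≤ v y + ∫ t in (0:ℝ)..1, ‖fderiv ℝ v (γ t)‖ * ‖x - y‖ := by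
    have h2 : ∫ t in (0:ℝ)..1, φ t ≤ ∫ t in (0:ℝ)..1, ‖fderiv ℝ v (γ t)‖ * ‖x - y‖ := by
      apply intervalIntegral.integral_mono_on zero_le_one hφii hBii
      intro t _
      exact (le_abs_self _).trans (hbound t)
    have := hftc
    rw [hγ1, hγ0] at this
    linarith [h2, this.ge, this.le]
  calc ENNReal.ofReal (v x)
      ≤ ENNReal.ofReal (v y + ∫ t in (0:ℝ)..1, ‖fderiv ℝ v (γ t)‖ * ‖x - y‖) :=
        ENNReal.ofReal_le_ofReal key
    _ ≤ ENNReal.ofReal (v y)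
        + ENNReal.ofReal (∫ t in (0:ℝ)..1, ‖fderiv ℝ v (γ t)‖ * ‖x - y‖) :=
        ENNReal.ofReal_add_le
    _ ≤ ENNReal.ofReal (v y) + ENNReal.ofReal ‖x - y‖ * J := by
        gcongr
        rw [intervalIntegral.integral_of_le zero_le_one]
        rw [ofReal_integral_eq_lintegral_ofReal hBint
          (Filter.Eventually.of_forall fun t => mul_nonneg (norm_nonneg _) (norm_nonneg _))]
        have hsplit : ∀ t : ℝ, ENNReal.ofReal (‖fderiv ℝ v (γ t)‖ * ‖x - y‖)
            = ENNReal.ofReal ‖fderiv ℝ v (γ t)‖ * ENNReal.ofReal ‖x - y‖ := fun t =>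
          ENNReal.ofReal_mul (norm_nonneg _)
        simp_rw [hsplit]
        rw [lintegral_mul_const' _ _ ENNReal.ofReal_ne_top, hJ, mul_comm]

lemma lemB2 {d : ℕ} (F : EuclideanSpace ℝ (Fin d) → ℝ≥0∞)
    (b : EuclideanSpace ℝ (Fin d)) {c : ℝ} (h1 : 2⁻¹ ≤ c) (h2 : c ≤ 1) :
    ∫⁻ z, F (b + c • z) ≤ ENNReal.ofReal ((2:ℝ) ^ d) * ∫⁻ z, F z := by
  have hc0 : (0:ℝ) < c := lt_of_lt_of_le (by norm_num) h1
  rw [lemB F b hc0.ne']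
  refine mul_le_mul_left (ENNReal.ofReal_le_ofReal ?_) _
  rw [abs_of_nonneg (by positivity)]
  have h3 : (1:ℝ) ≤ (2*c)^d := one_le_pow₀ (by linarith)
  rw [mul_pow] at h3
  rw [inv_eq_one_div, div_le_iff₀ (by positivity)]
  linarith

lemma lemC {d : ℕ} (Ω : Set (EuclideanSpace ℝ (Fin d)))
    (F : EuclideanSpace ℝ (Fin d) → ℝ≥0∞) (hF : Measurable F) :
    ∫⁻ x in Ω, ∫⁻ y in Ω, ∫⁻ t in Set.Ioc (0:ℝ) 1, F (y + t • (x - y)) ≤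
      ENNReal.ofReal ((2:ℝ) ^ d) * (volume Ω * ∫⁻ z, F z) := by
  set m := ∫⁻ z, F z with hm
  set C := ENNReal.ofReal ((2:ℝ) ^ d) with hC
  -- measurability of the 3-variable integrand
  have hF3 : Measurable fun p : (EuclideanSpace ℝ (Fin d) × EuclideanSpace ℝ (Fin d)) × ℝ =>
      F (p.1.2 + p.2 • (p.1.1 - p.1.2)) := hF.comp (by fun_prop)
  have hF3' : Measurable fun p : (EuclideanSpace ℝ (Fin d) × EuclideanSpace ℝ (Fin d)) × ℝ =>
      F (p.1.1 + p.2 • (p.1.2 - p.1.1)) := hF.comp (by fun_prop)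
  have hF2 : ∀ x : EuclideanSpace ℝ (Fin d),
      Measurable fun p : EuclideanSpace ℝ (Fin d) × ℝ => F (p.1 + p.2 • (x - p.1)) :=
    fun x => hF.comp (by fun_prop)
  have hF2' : ∀ y : EuclideanSpace ℝ (Fin d),
      Measurable fun p : EuclideanSpace ℝ (Fin d) × ℝ => F (y + p.2 • (p.1 - y)) :=
    fun y => hF.comp (by fun_prop)
  -- key inner bounds
  have key1 : ∀ (x : EuclideanSpace ℝ (Fin d)), ∀ t ∈ Set.Ioc (0:ℝ) 2⁻¹,
      ∫⁻ y in Ω, F (y + t • (x - y)) ≤ C * m := by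
    intro x t ht
    have hrw : ∀ y : EuclideanSpace ℝ (Fin d), y + t • (x - y) = t • x + (1 - t) • y := by
      intro y; simp [smul_sub, sub_smul, one_smul]; abel
    calc ∫⁻ y in Ω, F (y + t • (x - y)) ≤ ∫⁻ y, F (y + t • (x - y)) :=
          setLIntegral_le_lintegral _ _
      _ = ∫⁻ y, F (t • x + (1 - t) • y) := by simp_rw [hrw]
      _ ≤ C * m := lemB2 F (t • x) (by linarith [ht.2]) (by linarith [ht.1])
  have key2 : ∀ (y : EuclideanSpace ℝ (Fin d)), ∀ t ∈ Set.Ioc (2⁻¹:ℝ) 1,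
      ∫⁻ x in Ω, F (y + t • (x - y)) ≤ C * m := by
    intro y t ht
    have hrw : ∀ x : EuclideanSpace ℝ (Fin d), y + t • (x - y) = (y - t • y) + t • x := by
      intro x; simp [smul_sub]; abel
    calc ∫⁻ x in Ω, F (y + t • (x - y)) ≤ ∫⁻ x, F (y + t • (x - y)) :=
          setLIntegral_le_lintegral _ _
      _ = ∫⁻ x, F ((y - t • y) + t • x) := by simp_rw [hrw]
      _ ≤ C * m := lemB2 F (y - t • y) (by linarith [ht.1]) ht.2
  -- split the t-integral
  have step0 : ∀ x y : EuclideanSpace ℝ (Fin d),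
      ∫⁻ t in Set.Ioc (0:ℝ) 1, F (y + t • (x - y))
      = (∫⁻ t in Set.Ioc (0:ℝ) 2⁻¹, F (y + t • (x - y)))
        + ∫⁻ t in Set.Ioc (2⁻¹:ℝ) 1, F (y + t • (x - y)) := by
    intro x y
    rw [← lintegral_union measurableSet_Ioc (Set.Ioc_disjoint_Ioc_of_le le_rfl),
      Set.Ioc_union_Ioc_eq_Ioc (by norm_num) (by norm_num)]
  have T1bound : ∫⁻ x in Ω, ∫⁻ y in Ω, ∫⁻ t in Set.Ioc (0:ℝ) 2⁻¹, F (y + t • (x - y))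
      ≤ volume Ω * (ENNReal.ofReal 2⁻¹ * (C * m)) := by
    have inner : ∀ x : EuclideanSpace ℝ (Fin d),
        ∫⁻ y in Ω, ∫⁻ t in Set.Ioc (0:ℝ) 2⁻¹, F (y + t • (x - y))
        ≤ ENNReal.ofReal 2⁻¹ * (C * m) := by
      intro x
      rw [lintegral_lintegral_swap ((hF2 x).aemeasurable)]
      calc ∫⁻ t in Set.Ioc (0:ℝ) 2⁻¹, ∫⁻ y in Ω, F (y + t • (x - y))
          ≤ ∫⁻ _ in Set.Ioc (0:ℝ) 2⁻¹, C * m := by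
            refine lintegral_mono_ae ?_
            filter_upwards [ae_restrict_mem measurableSet_Ioc] with t ht
            exact key1 x t ht
        _ = ENNReal.ofReal 2⁻¹ * (C * m) := by
            rw [setLIntegral_const, Real.volume_Ioc, mul_comm]; norm_num
    calc ∫⁻ x in Ω, ∫⁻ y in Ω, ∫⁻ t in Set.Ioc (0:ℝ) 2⁻¹, F (y + t • (x - y))
        ≤ ∫⁻ _ in Ω, ENNReal.ofReal 2⁻¹ * (C * m) := lintegral_mono fun x => inner x
      _ = volume Ω * (ENNReal.ofReal 2⁻¹ * (C * m)) := by rw [setLIntegral_const, mul_comm]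
  have T2bound : ∫⁻ x in Ω, ∫⁻ y in Ω, ∫⁻ t in Set.Ioc (2⁻¹:ℝ) 1, F (y + t • (x - y))
      ≤ volume Ω * (ENNReal.ofReal 2⁻¹ * (C * m)) := by
    have hswap : ∫⁻ x in Ω, ∫⁻ y in Ω, ∫⁻ t in Set.Ioc (2⁻¹:ℝ) 1, F (y + t • (x - y))
        = ∫⁻ y in Ω, ∫⁻ x in Ω, ∫⁻ t in Set.Ioc (2⁻¹:ℝ) 1, F (y + t • (x - y)) := by
      apply lintegral_lintegral_swap
      exact (hF3.lintegral_prod_right').aemeasurable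
    rw [hswap]
    have inner : ∀ y : EuclideanSpace ℝ (Fin d),
        ∫⁻ x in Ω, ∫⁻ t in Set.Ioc (2⁻¹:ℝ) 1, F (y + t • (x - y))
        ≤ ENNReal.ofReal 2⁻¹ * (C * m) := by
      intro y
      rw [lintegral_lintegral_swap ((hF2' y).aemeasurable)]
      calc ∫⁻ t in Set.Ioc (2⁻¹:ℝ) 1, ∫⁻ x in Ω, F (y + t • (x - y))
          ≤ ∫⁻ _ in Set.Ioc (2⁻¹:ℝ) 1, C * m := by
            refine lintegral_mono_ae ?_
            filter_upwards [ae_restrict_mem measurableSet_Ioc] with t ht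
            exact key2 y t ht
        _ = ENNReal.ofReal 2⁻¹ * (C * m) := by
            rw [setLIntegral_const, Real.volume_Ioc, mul_comm]; norm_num
    calc ∫⁻ y in Ω, ∫⁻ x in Ω, ∫⁻ t in Set.Ioc (2⁻¹:ℝ) 1, F (y + t • (x - y))
        ≤ ∫⁻ _ in Ω, ENNReal.ofReal 2⁻¹ * (C * m) := lintegral_mono fun y => inner y
      _ = volume Ω * (ENNReal.ofReal 2⁻¹ * (C * m)) := by rw [setLIntegral_const, mul_comm]
  calc ∫⁻ x in Ω, ∫⁻ y in Ω, ∫⁻ t in Set.Ioc (0:ℝ) 1, F (y + t • (x - y))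
      = ∫⁻ x in Ω, ((∫⁻ y in Ω, ∫⁻ t in Set.Ioc (0:ℝ) 2⁻¹, F (y + t • (x - y)))
          + ∫⁻ y in Ω, ∫⁻ t in Set.Ioc (2⁻¹:ℝ) 1, F (y + t • (x - y))) := by
        refine lintegral_congr fun x => ?_
        calc ∫⁻ y in Ω, ∫⁻ t in Set.Ioc (0:ℝ) 1, F (y + t • (x - y))
            = ∫⁻ y in Ω, ((∫⁻ t in Set.Ioc (0:ℝ) 2⁻¹, F (y + t • (x - y)))
              + ∫⁻ t in Set.Ioc (2⁻¹:ℝ) 1, F (y + t • (x - y))) :=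
              lintegral_congr fun y => step0 x y
          _ = _ := lintegral_add_left ((hF2 x).lintegral_prod_right') _
    _ = (∫⁻ x in Ω, ∫⁻ y in Ω, ∫⁻ t in Set.Ioc (0:ℝ) 2⁻¹, F (y + t • (x - y)))
        + ∫⁻ x in Ω, ∫⁻ y in Ω, ∫⁻ t in Set.Ioc (2⁻¹:ℝ) 1, F (y + t • (x - y)) :=
        lintegral_add_left (Measurable.lintegral_prod_right'
          (Measurable.lintegral_prod_right' hF3)) _
    _ ≤ volume Ω * (ENNReal.ofReal 2⁻¹ * (C * m)) + volume Ω * (ENNReal.ofReal 2⁻¹ * (C * m)) :=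
        add_le_add T1bound T2bound
    _ = C * (volume Ω * m) := by
        rw [← two_mul]
        have h2 : ENNReal.ofReal (2⁻¹:ℝ) = 2⁻¹ := by
          rw [ENNReal.ofReal_inv_of_pos two_pos]; norm_num
        rw [h2]
        have h3 : (2:ℝ≥0∞) * (volume Ω * (2⁻¹ * (C * m)))
            = (2 * 2⁻¹) * (volume Ω * (C * m)) := by ring
        rw [h3, ENNReal.mul_inv_cancel (by norm_num) (by norm_num), one_mul]
        ring

lemma logplus_le_abs (x : ℝ) : max (Real.log x) 0 ≤ |x| := by
  rcases eq_or_ne x 0 with rfl | hx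
  · simp
  · have h := Real.log_le_sub_one_of_pos (abs_pos.2 hx)
    rw [Real.log_abs] at h
    exact max_le (by linarith) (abs_nonneg x)

set_option maxHeartbeats 2000000 in
/-- Generalized Poincaré inequality (Lemma 3.2 of the paper): for a nonempty bounded
open convex domain `Ω ⊆ ℝ^d` there are constants `C₁, C₂ > 0`, depending only on `Ω`,
such that every nonnegative differentiable `v` with `v` and `‖∇v‖` integrable on `Ω`
satisfies `∫_Ω v ≤ |Ω| exp(C₁ K) + (C₂/|Ω|) ∫_Ω ‖∇v‖`, where `K = ∫_Ω (log v)⁺`. -/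
theorem stmt0 (d : ℕ) (hd : 1 ≤ d) (Ω : Set (EuclideanSpace ℝ (Fin d)))
    (hne : Ω.Nonempty) (hbdd : Bornology.IsBounded Ω) (hopen : IsOpen Ω)
    (hconv : Convex ℝ Ω) :
    ∃ C₁ C₂ : ℝ, 0 < C₁ ∧ 0 < C₂ ∧
      ∀ v : EuclideanSpace ℝ (Fin d) → ℝ,
        (∀ x ∈ Ω, DifferentiableAt ℝ v x) →
        (∀ x ∈ Ω, 0 ≤ v x) →
        IntegrableOn v Ω →
        IntegrableOn (fun x => ‖fderiv ℝ v x‖) Ω →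
        ∫ x in Ω, v x ≤
          (volume Ω).toReal * Real.exp (C₁ * ∫ x in Ω, max (Real.log (v x)) 0)
            + (C₂ / (volume Ω).toReal) * ∫ x in Ω, ‖fderiv ℝ v x‖ := by
  classical
  have hΩm : MeasurableSet Ω := hopen.measurableSet
  set Ve := volume Ω with hVe
  have hV0 : 0 < Ve := hopen.measure_pos volume hne
  have hVt : Ve ≠ ⊤ := hbdd.measure_lt_top.ne
  set V : ℝ := Ve.toReal with hVr
  have hV0' : 0 < V := ENNReal.toReal_pos hV0.ne' hVt
  set D : ℝ := Metric.diam Ω with hDdef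
  have hD0 : 0 ≤ D := Metric.diam_nonneg
  refine ⟨2 / V, (D + 1) * 2 ^ (d + 1) * V, by positivity, by positivity, ?_⟩
  intro v hdiff hnn hvint hgint
  set ν := volume.restrict Ω with hν
  set K := ∫ x in Ω, max (Real.log (v x)) 0 with hK
  have hK0 : 0 ≤ K := integral_nonneg fun x => le_max_right _ _
  set M : ℝ := Real.exp (2 / V * K) with hM
  have hM1 : 1 ≤ M := Real.one_le_exp (by positivity)
  have hM0 : 0 < M := lt_of_lt_of_le one_pos hM1
  -- measurable representative of v
  set w := (hvint.1).mk v with hw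
  have hwm : StronglyMeasurable w := hvint.1.stronglyMeasurable_mk
  have hwmeas : Measurable w := hwm.measurable
  have hvw : v =ᵐ[ν] w := hvint.1.ae_eq_mk
  have hwint : Integrable w ν := hvint.congr hvw
  set N := toMeasurable ν {x | v x ≠ w x} with hNdef
  have hNsub : {x | v x ≠ w x} ⊆ N := subset_toMeasurable _ _
  have hNnull : ν N = 0 := by
    rw [measure_toMeasurable]
    exact hvw
  have hNm : MeasurableSet N := measurableSet_toMeasurable _ _
  set G := (Ω ∩ {x | w x ≤ M}) \ N with hGdef
  have hGm : MeasurableSet G :=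
    (hΩm.inter (measurableSet_le hwmeas measurable_const)).diff hNm
  have hGsub : G ⊆ Ω := fun y hy => hy.1.1
  have hGv : ∀ y ∈ G, v y ≤ M := by
    intro y hy
    have : v y = w y := by
      by_contra h
      exact hy.2 (hNsub h)
    rw [this]; exact hy.1.2
  -- the function f = (log w)⁺
  set f : EuclideanSpace ℝ (Fin d) → ℝ := fun x => max (Real.log (w x)) 0 with hf
  have hfm : Measurable f := (Real.measurable_log.comp hwmeas).max measurable_const
  have hfnn : ∀ x, 0 ≤ f x := fun x => le_max_right _ _
  have hfint : Integrable f ν := by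
    refine Integrable.mono' hwint.abs hfm.aestronglyMeasurable ?_
    exact Filter.Eventually.of_forall fun x => by
      rw [Real.norm_eq_abs, abs_of_nonneg (hfnn x)]
      exact logplus_le_abs (w x)
  have hKw : K = ∫ x, f x ∂ν := integral_congr_ae (hvw.mono fun x hx => by rw [hf]; simp [hx])
  -- Markov: the set where w > M is at most half of Ω
  have hhalf : ν {x | M < w x} ≤ Ve / 2 := by
    rcases eq_or_lt_of_le hK0 with hKz | hKp
    · -- K = 0 : f = 0 a.e., and w > M = exp 0 = 1 implies f > 0
      have hfz : f =ᵐ[ν] 0 := by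
        rw [← integral_eq_zero_iff_of_nonneg_ae (Filter.Eventually.of_forall hfnn) hfint]
        rw [← hKw, ← hKz]
      have : ν {x | M < w x} = 0 := by
        refine measure_mono_null ?_ (ae_iff.1 hfz : ν {x | ¬ f x = 0} = 0)
        intro x hx
        have hMx : (1:ℝ) ≤ M := hM1
        have : 0 < Real.log (w x) := Real.log_pos (lt_of_le_of_lt hMx hx)
        simp only [Set.mem_setOf_eq, hf]
        intro h
        have := le_max_left (Real.log (w x)) 0
        rw [h] at this
        linarith
      simp [this]
    · -- K > 0
      set ε : ℝ := 2 / V * K with hε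
      have hε0 : 0 < ε := by positivity
      have hsub : {x | M < w x} ⊆ {x | ε ≤ f x} := by
        intro x hx
        have h1 : Real.log M ≤ Real.log (w x) :=
          Real.log_le_log (by positivity) (le_of_lt hx)
        rw [hM, Real.log_exp] at h1
        exact le_trans h1 (le_max_left _ _)
      have hmkv := mul_meas_ge_le_integral_of_nonneg
        (Filter.Eventually.of_forall hfnn) hfint ε
      rw [← hKw] at hmkv
      have hfin : ν {x | ε ≤ f x} ≠ ⊤ := by
        refine ne_top_of_le_ne_top hVt ?_
        rw [hν, Measure.restrict_apply' hΩm]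
        exact measure_mono (Set.inter_subset_right)
      have htR : (ν {x | ε ≤ f x}).toReal ≤ V / 2 := by
        have : ε * (ν {x | ε ≤ f x}).toReal ≤ K := hmkv
        have h2 : (ν {x | ε ≤ f x}).toReal ≤ K / ε := by
          rw [le_div_iff₀ hε0]; linarith [this]
        have h3 : K / ε = V / 2 := by
          rw [hε]; field_simp
        linarith [h2, h3.le, h3.ge]
      calc ν {x | M < w x} ≤ ν {x | ε ≤ f x} := measure_mono hsub
        _ ≤ ENNReal.ofReal (V / 2) := by
            rw [← ENNReal.ofReal_toReal hfin]
            exact ENNReal.ofReal_le_ofReal htR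
        _ = Ve / 2 := by
            rw [ENNReal.ofReal_div_of_pos two_pos, hVr, ENNReal.ofReal_toReal hVt]
            norm_num
  -- lower bound for ν G
  have hcover : Ω ⊆ G ∪ (N ∪ {x | M < w x}) := by
    intro x hx
    by_cases hxN : x ∈ N
    · exact Or.inr (Or.inl hxN)
    · rcases le_or_gt (w x) M with h | h
      · exact Or.inl ⟨⟨hx, h⟩, hxN⟩
      · exact Or.inr (Or.inr h)
  have hνΩ : ν Ω = Ve := by rw [hν, Measure.restrict_apply' hΩm]; simp [hVe]
  have hG2 : Ve / 2 ≤ ν G := by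
    have h1 : Ve ≤ ν G + Ve / 2 := by
      calc Ve = ν Ω := hνΩ.symm
        _ ≤ ν (G ∪ (N ∪ {x | M < w x})) := measure_mono hcover
        _ ≤ ν G + ν (N ∪ {x | M < w x}) := measure_union_le _ _
        _ ≤ ν G + (ν N + ν {x | M < w x}) := by gcongr; exact measure_union_le _ _
        _ ≤ ν G + (0 + Ve / 2) := add_le_add le_rfl (add_le_add hNnull.le hhalf)
        _ = ν G + Ve / 2 := by rw [zero_add]
    have := tsub_le_iff_right.mpr h1
    rwa [ENNReal.sub_half hVt] at this
  have hνG : ν G = volume G := by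
    rw [hν, Measure.restrict_apply' hΩm, Set.inter_eq_self_of_subset_left hGsub]
  rw [hνG] at hG2
  set g := volume G with hg
  have hg0 : g ≠ 0 := by
    have h2 : (0:ℝ≥0∞) < Ve / 2 := ENNReal.div_pos hV0.ne' (by norm_num)
    exact (lt_of_lt_of_le h2 hG2).ne'
  have hgt : g ≠ ⊤ := ne_top_of_le_ne_top hVt (measure_mono hGsub)
  -- the gradient kernel
  set Fi : EuclideanSpace ℝ (Fin d) → ℝ≥0∞ :=
    Ω.indicator (fun z => ENNReal.ofReal ‖fderiv ℝ v z‖) with hFi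
  have hFim : Measurable Fi := by
    refine Measurable.indicator ?_ hΩm
    exact ENNReal.measurable_ofReal.comp ((measurable_fderiv ℝ v).norm)
  have hFitot : ∫⁻ z, Fi z = ENNReal.ofReal (∫ x in Ω, ‖fderiv ℝ v x‖) := by
    rw [hFi, lintegral_indicator hΩm]
    rw [ofReal_integral_eq_lintegral_ofReal hgint
      (Filter.Eventually.of_forall fun x => norm_nonneg _)]
  -- pointwise bound
  have hptA : ∀ x ∈ Ω, ∀ y ∈ G, ENNReal.ofReal (v x) ≤ ENNReal.ofReal M +
      ENNReal.ofReal D * ∫⁻ t in Set.Ioc (0:ℝ) 1, Fi (y + t • (x - y)) := by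
    intro x hx y hy
    have hyΩ : y ∈ Ω := hGsub hy
    have hFieq : ∫⁻ t in Set.Ioc (0:ℝ) 1, Fi (y + t • (x - y))
        = ∫⁻ t in Set.Ioc (0:ℝ) 1, ENNReal.ofReal ‖fderiv ℝ v (y + t • (x - y))‖ := by
      refine setLIntegral_congr_fun measurableSet_Ioc
        (fun t ht => ?_)
      have hmem : y + t • (x - y) ∈ Ω := by
        have : (1 - t) • y + t • x ∈ Ω :=
          hconv hyΩ hx (by linarith [ht.2]) (le_of_lt ht.1) (by ring)
        convert this using 1
        simp [smul_sub, sub_smul, one_smul]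
        abel
      rw [hFi, Set.indicator_of_mem hmem]
    rw [hFieq]
    refine le_trans (lemA hconv hdiff hx hyΩ) ?_
    gcongr
    · exact hGv y hy
    · rw [← dist_eq_norm]
      exact Metric.dist_le_diam_of_mem hbdd hx hyΩ
  -- measurability of the inner double integral
  have hFimap : Measurable fun p :
      (EuclideanSpace ℝ (Fin d) × EuclideanSpace ℝ (Fin d)) × ℝ =>
      Fi (p.1.2 + p.2 • (p.1.1 - p.1.2)) := hFim.comp (by fun_prop)
  have hHm : ∀ x : EuclideanSpace ℝ (Fin d),
      Measurable fun y => ∫⁻ t in Set.Ioc (0:ℝ) 1, Fi (y + t • (x - y)) := by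
    intro x
    exact Measurable.lintegral_prod_right'
      (hFim.comp (show Measurable fun p : EuclideanSpace ℝ (Fin d) × ℝ =>
        p.1 + p.2 • (x - p.1) by fun_prop))
  -- integrate the pointwise bound over y ∈ G
  have step1 : ∀ x ∈ Ω, ENNReal.ofReal (v x) * g ≤ ENNReal.ofReal M * g +
      ENNReal.ofReal D * ∫⁻ y in Ω, ∫⁻ t in Set.Ioc (0:ℝ) 1, Fi (y + t • (x - y)) := by
    intro x hx
    calc ENNReal.ofReal (v x) * g
        = ∫⁻ _ in G, ENNReal.ofReal (v x) := by rw [setLIntegral_const]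
      _ ≤ ∫⁻ y in G, (ENNReal.ofReal M +
            ENNReal.ofReal D * ∫⁻ t in Set.Ioc (0:ℝ) 1, Fi (y + t • (x - y))) := by
          refine lintegral_mono_ae ?_
          filter_upwards [ae_restrict_mem hGm] with y hy
          exact hptA x hx y hy
      _ = ENNReal.ofReal M * g +
          ENNReal.ofReal D * ∫⁻ y in G, ∫⁻ t in Set.Ioc (0:ℝ) 1, Fi (y + t • (x - y)) := by
          rw [lintegral_add_left measurable_const, setLIntegral_const,
            lintegral_const_mul' _ _ ENNReal.ofReal_ne_top]
      _ ≤ ENNReal.ofReal M * g +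
          ENNReal.ofReal D * ∫⁻ y in Ω, ∫⁻ t in Set.Ioc (0:ℝ) 1, Fi (y + t • (x - y)) := by
          gcongr
  -- divide by g
  have step2 : ∀ x ∈ Ω, ENNReal.ofReal (v x) ≤ ENNReal.ofReal M +
      (ENNReal.ofReal D * g⁻¹) *
        ∫⁻ y in Ω, ∫⁻ t in Set.Ioc (0:ℝ) 1, Fi (y + t • (x - y)) := by
    intro x hx
    have h := step1 x hx
    set Hx := ∫⁻ y in Ω, ∫⁻ t in Set.Ioc (0:ℝ) 1, Fi (y + t • (x - y)) with hHx
    calc ENNReal.ofReal (v x)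
        ≤ (ENNReal.ofReal M * g + ENNReal.ofReal D * Hx) / g :=
          (ENNReal.le_div_iff_mul_le (Or.inl hg0) (Or.inl hgt)).2 h
      _ = ENNReal.ofReal M + (ENNReal.ofReal D * g⁻¹) * Hx := by
          have hring : (ENNReal.ofReal M * g + ENNReal.ofReal D * Hx) * g⁻¹
              = ENNReal.ofReal M * (g * g⁻¹) + (ENNReal.ofReal D * g⁻¹) * Hx := by ring
          rw [div_eq_mul_inv, hring, ENNReal.mul_inv_cancel hg0 hgt, mul_one]
  -- integrate over x ∈ Ω
  have hDg_ne_top : ENNReal.ofReal D * g⁻¹ ≠ ⊤ :=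
    ENNReal.mul_ne_top ENNReal.ofReal_ne_top (ENNReal.inv_ne_top.2 hg0)
  have step3 : ∫⁻ x in Ω, ENNReal.ofReal (v x) ≤ ENNReal.ofReal M * Ve +
      (ENNReal.ofReal D * g⁻¹) * ∫⁻ x in Ω, ∫⁻ y in Ω,
        ∫⁻ t in Set.Ioc (0:ℝ) 1, Fi (y + t • (x - y)) := by
    calc ∫⁻ x in Ω, ENNReal.ofReal (v x)
        ≤ ∫⁻ x in Ω, (ENNReal.ofReal M + (ENNReal.ofReal D * g⁻¹) *
            ∫⁻ y in Ω, ∫⁻ t in Set.Ioc (0:ℝ) 1, Fi (y + t • (x - y))) := by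
          refine lintegral_mono_ae ?_
          filter_upwards [ae_restrict_mem hΩm] with x hx
          exact step2 x hx
      _ = ENNReal.ofReal M * Ve + (ENNReal.ofReal D * g⁻¹) * ∫⁻ x in Ω, ∫⁻ y in Ω,
            ∫⁻ t in Set.Ioc (0:ℝ) 1, Fi (y + t • (x - y)) := by
          rw [lintegral_add_left measurable_const, setLIntegral_const,
            lintegral_const_mul' _ _ hDg_ne_top]
  -- kernel bound
  set I2 : ℝ := ∫ x in Ω, ‖fderiv ℝ v x‖ with hI2def
  have hI2 : 0 ≤ I2 := integral_nonneg fun x => norm_nonneg _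
  have hT : ∫⁻ x in Ω, ∫⁻ y in Ω, ∫⁻ t in Set.Ioc (0:ℝ) 1, Fi (y + t • (x - y))
      ≤ ENNReal.ofReal ((2:ℝ) ^ d) * (Ve * ENNReal.ofReal I2) := by
    have := lemC Ω Fi hFim
    rwa [hFitot] at this
  have hgV : g⁻¹ * Ve ≤ 2 := by
    have h1 : Ve ≤ g * 2 :=
      (ENNReal.div_le_iff_le_mul (Or.inl (by norm_num)) (Or.inl (by norm_num))).1 hG2
    calc g⁻¹ * Ve ≤ g⁻¹ * (g * 2) := mul_le_mul_right h1 _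
      _ = (g⁻¹ * g) * 2 := by ring
      _ = 2 := by rw [ENNReal.inv_mul_cancel hg0 hgt, one_mul]
  -- final ENNReal inequality
  have hveq : ENNReal.ofReal (∫ x in Ω, v x) = ∫⁻ x in Ω, ENNReal.ofReal (v x) :=
    ofReal_integral_eq_lintegral_ofReal hvint ((ae_restrict_iff' hΩm).2 (ae_of_all _ hnn))
  have hfinal : ENNReal.ofReal (∫ x in Ω, v x)
      ≤ ENNReal.ofReal (M * V + D * 2 ^ d * I2 * 2) := by
    rw [hveq]
    calc ∫⁻ x in Ω, ENNReal.ofReal (v x)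
        ≤ ENNReal.ofReal M * Ve + (ENNReal.ofReal D * g⁻¹) *
            (ENNReal.ofReal ((2:ℝ) ^ d) * (Ve * ENNReal.ofReal I2)) := by
          refine le_trans step3 ?_
          gcongr
      _ = ENNReal.ofReal M * Ve +
          (ENNReal.ofReal D * ENNReal.ofReal ((2:ℝ) ^ d) * ENNReal.ofReal I2) * (g⁻¹ * Ve) := by
          ring
      _ ≤ ENNReal.ofReal M * Ve +
          (ENNReal.ofReal D * ENNReal.ofReal ((2:ℝ) ^ d) * ENNReal.ofReal I2) * 2 :=
          add_le_add le_rfl (mul_le_mul_right hgV _)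
      _ = ENNReal.ofReal (M * V + D * 2 ^ d * I2 * 2) := by
          rw [show Ve = ENNReal.ofReal V by rw [hVr, ENNReal.ofReal_toReal hVt]]
          rw [← ENNReal.ofReal_mul (le_of_lt hM0),
            ← ENNReal.ofReal_mul hD0,
            ← ENNReal.ofReal_mul (by positivity),
            show (2:ℝ≥0∞) = ENNReal.ofReal 2 by norm_num,
            ← ENNReal.ofReal_mul (by positivity),
            ← ENNReal.ofReal_add (by positivity) (by positivity)]
  have hreal : ∫ x in Ω, v x ≤ M * V + D * 2 ^ d * I2 * 2 :=
    (ENNReal.ofReal_le_ofReal_iff (by positivity)).1 hfinal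
  -- conclude
  have hc2 : (D + 1) * 2 ^ (d + 1) * V / V = (D + 1) * 2 ^ (d + 1) := by
    field_simp
  rw [hc2]
  have hkey : D * 2 ^ d * I2 * 2 ≤ (D + 1) * 2 ^ (d + 1) * I2 := by
    rw [pow_succ]
    nlinarith [mul_nonneg (mul_nonneg (pow_nonneg (by norm_num : (0:ℝ) ≤ 2) d)
      (by norm_num : (0:ℝ) ≤ 2)) hI2]
  calc ∫ x in Ω, v x ≤ M * V + D * 2 ^ d * I2 * 2 := hreal
    _ ≤ V * Real.exp (2 / V * K) + (D + 1) * 2 ^ (d + 1) * I2 := by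
        rw [hM] at *
        nlinarith [hkey]
    _ = V * Real.exp (2 / V * K) + (D + 1) * 2 ^ (d + 1) * I2 := rfl
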